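/- If π is a Baxter permutation of length n, then its inverse π⁻¹ is also a Baxter permutation. -/

import Mathlib

def IsBaxter {n : ℕ} (π : Equiv.Perm (Fin n)) : Prop :=
  ¬ ∃ i j k l : Fin n, i < j ∧ j < k ∧ k < l ∧
    ((((π k : ℕ) < (π i : ℕ) + 1) ∧ ((π i : ℕ) + 1 = (π l : ℕ)) ∧ ((π l : ℕ) < (π j : ℕ))) ∨
     (((π j : ℕ) < (π i : ℕ)) ∧ ((π i : ℕ) = (π l : ℕ) + 1) ∧ ((π i : ℕ) < (π k : ℕ))))

private lemma exists_step {P : ℕ → Prop} :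
    ∀ {b a : ℕ}, a ≤ b → P a → ¬ P b → ∃ m, a ≤ m ∧ m < b ∧ P m ∧ ¬ P (m + 1) := by
  intro b
  induction b with
  | zero =>
    intro a hab ha hb
    exact absurd (Nat.le_zero.mp hab ▸ ha) hb
  | succ b ih =>
    intro a hab ha hb
    have hab' : a ≤ b := by
      rcases Nat.eq_or_lt_of_le hab with h1 | h2
      · exact absurd (h1 ▸ ha) hb
      · omega
    by_cases hPb : P b
    · exact ⟨b, hab', Nat.lt_succ_self b, hPb, hb⟩
    · obtain ⟨m, h1, h2, h3, h4⟩ := ih hab' ha hPb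
      exact ⟨m, h1, Nat.lt_succ_of_lt h2, h3, h4⟩

/-- The inverse of a Baxter permutation is Baxter. -/
theorem baxter_inverse {n : ℕ} (π : Equiv.Perm (Fin n)) (h : IsBaxter π) :
    IsBaxter π⁻¹ := by
  classical
  rintro ⟨i, j, k, l, hij, hjk, hkl, hcase⟩
  apply h
  have hπσ : ∀ x : Fin n, π (π⁻¹ x) = x := fun x => by simp
  have hjkN : (j : ℕ) < (k : ℕ) := hjk
  have hijN : (i : ℕ) < (j : ℕ) := hij
  have hklN : (k : ℕ) < (l : ℕ) := hkl
  have hkn : (k : ℕ) < n := k.isLt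
  have ei : (π (π⁻¹ i)).val = i.val := by rw [hπσ]
  have ej : (π (π⁻¹ j)).val = j.val := by rw [hπσ]
  have ek : (π (π⁻¹ k)).val = k.val := by rw [hπσ]
  have el : (π (π⁻¹ l)).val = l.val := by rw [hπσ]
  rcases hcase with ⟨h1, h2, h3⟩ | ⟨h1, h2, h3⟩
  · -- case 1 : in π, positions (π⁻¹ k) ≤ (π⁻¹ i) < (π⁻¹ l) = (π⁻¹ i)+1 < (π⁻¹ j)
    have hPj : ∃ hm : (j : ℕ) < n, (π⁻¹ i : Fin n).val < (π⁻¹ ⟨(j : ℕ), hm⟩ : Fin n).val := by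
      refine ⟨j.isLt, ?_⟩
      show (π⁻¹ i : Fin n).val < (π⁻¹ j : Fin n).val
      omega
    have hPk : ¬ ∃ hm : (k : ℕ) < n, (π⁻¹ i : Fin n).val < (π⁻¹ ⟨(k : ℕ), hm⟩ : Fin n).val := by
      rintro ⟨hm, hlt⟩
      have hlt' : (π⁻¹ i : Fin n).val < (π⁻¹ k : Fin n).val := hlt
      omega
    obtain ⟨m, hjm, hmk, hPm, hPm1⟩ := exists_step
      (P := fun m => ∃ hm : m < n, (π⁻¹ i : Fin n).val < (π⁻¹ ⟨m, hm⟩ : Fin n).val)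
      (le_of_lt hjkN) hPj hPk
    have hm1n : m + 1 < n := by omega
    obtain ⟨hmn', hL⟩ := hPm
    have hIle : (π⁻¹ (⟨m + 1, hm1n⟩ : Fin n) : Fin n).val ≤ (π⁻¹ i : Fin n).val := by
      by_contra hcon
      exact hPm1 ⟨hm1n, lt_of_not_ge hcon⟩
    have e1 : (π (π⁻¹ (⟨m + 1, hm1n⟩ : Fin n))).val = m + 1 := by rw [hπσ]
    have e2 : (π (π⁻¹ (⟨m, hmn'⟩ : Fin n))).val = m := by rw [hπσ]
    have ne1 : (π⁻¹ (⟨m + 1, hm1n⟩ : Fin n) : Fin n).val ≠ (π⁻¹ i : Fin n).val := by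
      intro he
      have h6 : π (π⁻¹ (⟨m + 1, hm1n⟩ : Fin n)) = π (π⁻¹ i) := congrArg π (Fin.ext he)
      have h5 : m + 1 = i.val := by rw [← e1, ← ei, h6]
      omega
    have ne2 : (π⁻¹ l : Fin n).val ≠ (π⁻¹ (⟨m, hmn'⟩ : Fin n) : Fin n).val := by
      intro he
      have h6 : π (π⁻¹ l) = π (π⁻¹ (⟨m, hmn'⟩ : Fin n)) := congrArg π (Fin.ext he)
      have h5 : l.val = m := by rw [← el, ← e2, h6]
      omega
    exact ⟨π⁻¹ ⟨m + 1, hm1n⟩, π⁻¹ i, π⁻¹ l, π⁻¹ ⟨m, hmn'⟩,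
      Fin.lt_def.mpr (by omega), Fin.lt_def.mpr (by omega), Fin.lt_def.mpr (by omega),
      Or.inr ⟨by omega, by omega, by omega⟩⟩
  · -- case 2 : in π, positions (π⁻¹ j) < (π⁻¹ l) < (π⁻¹ i) = (π⁻¹ l)+1 < (π⁻¹ k)
    have hbd : (π⁻¹ j : Fin n).val ≠ (π⁻¹ l : Fin n).val := by
      intro he
      have h6 : π (π⁻¹ j) = π (π⁻¹ l) := congrArg π (Fin.ext he)
      have h5 : j.val = l.val := by rw [← ej, ← el, h6]
      omega
    have hPj : ∃ hm : (j : ℕ) < n, (π⁻¹ ⟨(j : ℕ), hm⟩ : Fin n).val < (π⁻¹ l : Fin n).val := by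
      refine ⟨j.isLt, ?_⟩
      show (π⁻¹ j : Fin n).val < (π⁻¹ l : Fin n).val
      omega
    have hPk : ¬ ∃ hm : (k : ℕ) < n, (π⁻¹ ⟨(k : ℕ), hm⟩ : Fin n).val < (π⁻¹ l : Fin n).val := by
      rintro ⟨hm, hlt⟩
      have hlt' : (π⁻¹ k : Fin n).val < (π⁻¹ l : Fin n).val := hlt
      omega
    obtain ⟨m, hjm, hmk, hPm, hPm1⟩ := exists_step
      (P := fun m => ∃ hm : m < n, (π⁻¹ ⟨m, hm⟩ : Fin n).val < (π⁻¹ l : Fin n).val)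
      (le_of_lt hjkN) hPj hPk
    have hm1n : m + 1 < n := by omega
    obtain ⟨hmn', hI⟩ := hPm
    have hLge : (π⁻¹ l : Fin n).val ≤ (π⁻¹ (⟨m + 1, hm1n⟩ : Fin n) : Fin n).val := by
      by_contra hcon
      exact hPm1 ⟨hm1n, lt_of_not_ge hcon⟩
    have e1 : (π (π⁻¹ (⟨m, hmn'⟩ : Fin n))).val = m := by rw [hπσ]
    have e2 : (π (π⁻¹ (⟨m + 1, hm1n⟩ : Fin n))).val = m + 1 := by rw [hπσ]
    have ne1 : (π⁻¹ (⟨m + 1, hm1n⟩ : Fin n) : Fin n).val ≠ (π⁻¹ l : Fin n).val := by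
      intro he
      have h6 : π (π⁻¹ (⟨m + 1, hm1n⟩ : Fin n)) = π (π⁻¹ l) := congrArg π (Fin.ext he)
      have h5 : m + 1 = l.val := by rw [← e2, ← el, h6]
      omega
    have ne2 : (π⁻¹ (⟨m + 1, hm1n⟩ : Fin n) : Fin n).val ≠ (π⁻¹ i : Fin n).val := by
      intro he
      have h6 : π (π⁻¹ (⟨m + 1, hm1n⟩ : Fin n)) = π (π⁻¹ i) := congrArg π (Fin.ext he)
      have h5 : m + 1 = i.val := by rw [← e2, ← ei, h6]
      omega
    exact ⟨π⁻¹ ⟨m, hmn'⟩, π⁻¹ l, π⁻¹ i, π⁻¹ ⟨m + 1, hm1n⟩,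
      Fin.lt_def.mpr (by omega), Fin.lt_def.mpr (by omega), Fin.lt_def.mpr (by omega),
      Or.inl ⟨by omega, by omega, by omega⟩⟩
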